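/- For every (u,v) ∈ ℝ³ × ℝ³ with Q(u,v) < 1, one has F(G(u,v)) = (u,v). Combined with G ∘ F = id, the forward constitutive map F is a bijection from ℝ³ × ℝ³ onto the open set D = {(u,v) : Q(u,v) < 1}, with inverse G. -/

import Mathlib

/-- The quadratic form `Q(u,v)`. -/
def Q (α β ζ η ι : ℝ) (u v : Fin 3 → ℝ) : ℝ :=
  α ^ 2 * (u 0 ^ 2 + u 1 ^ 2) + β ^ 2 * u 2 ^ 2 + ζ ^ 2 * (v 0 ^ 2 + v 1 ^ 2)
    + η ^ 2 * (v 2 - 1) ^ 2 + 2 * ι * u 2 * (v 2 - 1)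

/-- The complementary quadratic form `Q*(m,n)`. -/
noncomputable def Qstar (α β ζ η ι : ℝ) (m n : Fin 3 → ℝ) : ℝ :=
  (m 0 ^ 2 + m 1 ^ 2) / α ^ 2 + (n 0 ^ 2 + n 1 ^ 2) / ζ ^ 2
    + (η ^ 2 * m 2 ^ 2 + β ^ 2 * n 2 ^ 2 - 2 * ι * m 2 * n 2) / (β ^ 2 * η ^ 2 - ι ^ 2)

/-- The forward constitutive map `F : (m,n) ↦ (u,v)`, with
`λ = (γ^p + Q*(m,n)^{p/2})^{−1/p}`. -/
noncomputable def Fmap (p α β γ ζ η ι : ℝ) (m n : Fin 3 → ℝ) :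
    (Fin 3 → ℝ) × (Fin 3 → ℝ) :=
  let lam : ℝ := (γ ^ p + (Qstar α β ζ η ι m n) ^ (p / 2)) ^ (-(1 / p))
  (![lam * m 0 / α ^ 2, lam * m 1 / α ^ 2,
      lam * (η ^ 2 * m 2 - ι * n 2) / (β ^ 2 * η ^ 2 - ι ^ 2)],
   ![lam * n 0 / ζ ^ 2, lam * n 1 / ζ ^ 2,
      1 + lam * (β ^ 2 * n 2 - ι * m 2) / (β ^ 2 * η ^ 2 - ι ^ 2)])

/-- The backward constitutive map `G : (u,v) ↦ (m,n)`, with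
`μ = γ(1 − Q(u,v)^{p/2})^{−1/p}`. -/
noncomputable def Gmap (p α β γ ζ η ι : ℝ) (u v : Fin 3 → ℝ) :
    (Fin 3 → ℝ) × (Fin 3 → ℝ) :=
  let mu : ℝ := γ * (1 - (Q α β ζ η ι u v) ^ (p / 2)) ^ (-(1 / p))
  (![mu * α ^ 2 * u 0, mu * α ^ 2 * u 1, mu * (β ^ 2 * u 2 + ι * (v 2 - 1))],
   ![mu * ζ ^ 2 * v 0, mu * ζ ^ 2 * v 1, mu * (ι * u 2 + η ^ 2 * (v 2 - 1))])




lemma key1 (p γ q : ℝ) (hp : 0 < p) (hγ : 0 < γ) (hq : 0 ≤ q) (hq1 : q < 1) :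
    (γ ^ p + ((γ * (1 - q ^ (p/2)) ^ (-(1/p))) ^ 2 * q) ^ (p / 2)) ^ (-(1 / p))
      * (γ * (1 - q ^ (p/2)) ^ (-(1/p))) = 1 := by
  have hp2 : (0:ℝ) < p / 2 := by positivity
  have hqp : q ^ (p/2) < 1 := Real.rpow_lt_one hq hq1 hp2
  set s : ℝ := 1 - q ^ (p/2) with hs_def
  have hs : 0 < s := by simp [hs_def]; linarith
  set μ : ℝ := γ * s ^ (-(1/p)) with hμ_def
  have hμ : 0 < μ := by positivity
  have h1 : (μ ^ 2 * q) ^ (p/2) = μ ^ p * q ^ (p/2) := by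
    rw [Real.mul_rpow (by positivity) hq]
    congr 1
    rw [← Real.rpow_natCast μ 2, ← Real.rpow_mul hμ.le]
    congr 1
    push_cast
    ring
  have h2 : μ ^ p = γ ^ p * s⁻¹ := by
    rw [hμ_def, Real.mul_rpow hγ.le (by positivity), ← Real.rpow_mul hs.le]
    rw [show -(1/p) * p = -1 by field_simp]
    rw [Real.rpow_neg_one]
  have h3 : γ ^ p + (μ ^ 2 * q) ^ (p/2) = γ ^ p * s⁻¹ := by
    rw [h1, h2]
    have : q ^ (p/2) = 1 - s := by rw [hs_def]; ring
    rw [this]; field_simp; ring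
  rw [h3, Real.mul_rpow (by positivity) (by positivity)]
  rw [← Real.rpow_mul hγ.le, show p * -(1/p) = -1 by field_simp, Real.rpow_neg_one]
  rw [Real.inv_rpow hs.le, hμ_def]
  have : s ^ (-(1/p)) ≠ 0 := by positivity
  field_simp

lemma key2 (p γ q : ℝ) (hp : 0 < p) (hγ : 0 < γ) (hq : 0 ≤ q) :
    ((γ ^ p + q ^ (p/2)) ^ (-(1/p))) ^ 2 * q < 1 ∧
    γ * (1 - (((γ ^ p + q ^ (p/2)) ^ (-(1/p))) ^ 2 * q) ^ (p/2)) ^ (-(1/p))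
      * ((γ ^ p + q ^ (p/2)) ^ (-(1/p))) = 1 := by
  have hp2 : (0:ℝ) < p / 2 := by positivity
  have hγp : (0:ℝ) < γ ^ p := Real.rpow_pos_of_pos hγ p
  have hqp : (0:ℝ) ≤ q ^ (p/2) := Real.rpow_nonneg hq _
  set t : ℝ := γ ^ p + q ^ (p/2) with ht_def
  have ht : 0 < t := by positivity
  set lam : ℝ := t ^ (-(1/p)) with hlam_def
  have hlam : 0 < lam := by positivity
  have h1 : (lam ^ 2 * q) ^ (p/2) = t⁻¹ * q ^ (p/2) := by
    rw [Real.mul_rpow (by positivity) hq]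
    congr 1
    rw [hlam_def, ← Real.rpow_natCast (t ^ (-(1/p))) 2, ← Real.rpow_mul ht.le,
      ← Real.rpow_mul ht.le]
    rw [show -(1/p) * ((2:ℕ):ℝ) * (p/2) = -1 by push_cast; field_simp]
    exact Real.rpow_neg_one t
  have h2 : 1 - (lam ^ 2 * q) ^ (p/2) = γ ^ p * t⁻¹ := by
    rw [h1]; field_simp; rw [ht_def]; ring
  constructor
  · by_contra h
    push_neg at h
    have h3 : (1:ℝ) ≤ (lam ^ 2 * q) ^ (p/2) := Real.one_le_rpow h hp2.le
    rw [h1] at h3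
    have h5 : t * 1 ≤ t * (t⁻¹ * q ^ (p/2)) := mul_le_mul_of_nonneg_left h3 ht.le
    rw [← mul_assoc, mul_inv_cancel₀ ht.ne'] at h5
    simp only [mul_one, one_mul] at h5
    rw [ht_def] at h5
    linarith
  · rw [h2, Real.mul_rpow hγp.le (by positivity)]
    rw [← Real.rpow_mul hγ.le, show p * -(1/p) = -1 by field_simp, Real.rpow_neg_one]
    rw [Real.inv_rpow ht.le, hlam_def]
    have : t ^ (-(1/p)) ≠ 0 := by positivity
    field_simp

lemma Q_nonneg (α β ζ η ι : ℝ) (u v : Fin 3 → ℝ)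
    (hβηι : 0 < β ^ 2 * η ^ 2 - ι ^ 2) : 0 ≤ Q α β ζ η ι u v := by
  have hβ2 : 0 < β ^ 2 := by nlinarith [sq_nonneg ι, sq_nonneg (β*η)]
  unfold Q
  nlinarith [sq_nonneg (β ^ 2 * u 2 + ι * (v 2 - 1)), mul_nonneg hβηι.le (sq_nonneg (v 2 - 1)),
    sq_nonneg (u 0), sq_nonneg (u 1), sq_nonneg (v 0), sq_nonneg (v 1),
    mul_nonneg (sq_nonneg α) (add_nonneg (sq_nonneg (u 0)) (sq_nonneg (u 1))),
    mul_nonneg (sq_nonneg ζ) (add_nonneg (sq_nonneg (v 0)) (sq_nonneg (v 1)))]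

lemma Qstar_nonneg (α β ζ η ι : ℝ) (m n : Fin 3 → ℝ) (hα : 0 < α) (hζ : 0 < ζ)
    (hβηι : 0 < β ^ 2 * η ^ 2 - ι ^ 2) : 0 ≤ Qstar α β ζ η ι m n := by
  have hη2 : 0 < η ^ 2 := by nlinarith [sq_nonneg ι, sq_nonneg (β*η)]
  unfold Qstar
  have h1 : 0 ≤ (m 0 ^ 2 + m 1 ^ 2) / α ^ 2 := by positivity
  have h2 : 0 ≤ (n 0 ^ 2 + n 1 ^ 2) / ζ ^ 2 := by positivity
  have h3 : 0 ≤ (η ^ 2 * m 2 ^ 2 + β ^ 2 * n 2 ^ 2 - 2 * ι * m 2 * n 2) / (β ^ 2 * η ^ 2 - ι ^ 2) := by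
    apply div_nonneg _ hβηι.le
    nlinarith [sq_nonneg (η ^ 2 * m 2 - ι * n 2), mul_nonneg hβηι.le (sq_nonneg (n 2))]
  linarith


lemma FG (p α β γ ζ η ι : ℝ) (hp : 0 < p) (hα : 0 < α)
    (hβ : 0 < β) (hγ : 0 < γ) (hζ : 0 < ζ) (hη : 0 < η)
    (hβηι : 0 < β ^ 2 * η ^ 2 - ι ^ 2) (u v : Fin 3 → ℝ) (huv : Q α β ζ η ι u v < 1) :
    Fmap p α β γ ζ η ι (Gmap p α β γ ζ η ι u v).1 (Gmap p α β γ ζ η ι u v).2 = (u, v) := by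
  have hα2 : (α:ℝ) ^ 2 ≠ 0 := by positivity
  have hζ2 : (ζ:ℝ) ^ 2 ≠ 0 := by positivity
  have hD : (β ^ 2 * η ^ 2 - ι ^ 2 : ℝ) ≠ 0 := hβηι.ne'
  have hD' : (η ^ 2 * β ^ 2 - ι ^ 2 : ℝ) ≠ 0 := by intro h; apply hD; linear_combination h
  have hD'' : (-ι ^ 2 + η ^ 2 * β ^ 2 : ℝ) ≠ 0 := by intro h; apply hD; linear_combination h
  have hQ0 : 0 ≤ Q α β ζ η ι u v := Q_nonneg α β ζ η ι u v hβηι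
  set q : ℝ := Q α β ζ η ι u v with hq_def
  set μ : ℝ := γ * (1 - q ^ (p/2)) ^ (-(1/p)) with hμ_def
  set M : Fin 3 → ℝ := ![μ * α ^ 2 * u 0, μ * α ^ 2 * u 1, μ * (β ^ 2 * u 2 + ι * (v 2 - 1))] with hM
  set N : Fin 3 → ℝ := ![μ * ζ ^ 2 * v 0, μ * ζ ^ 2 * v 1, μ * (ι * u 2 + η ^ 2 * (v 2 - 1))] with hN
  have hG : Gmap p α β γ ζ η ι u v = (M, N) := rfl
  rw [hG]
  have hQs : Qstar α β ζ η ι M N = μ ^ 2 * q := by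
    rw [hM, hN, Qstar, hq_def, Q]
    simp only [Matrix.cons_val_zero, Matrix.cons_val_one, Matrix.head_cons,
      Matrix.cons_val_two, Matrix.tail_cons]
    field_simp
    ring
  set lam : ℝ := (γ ^ p + (Qstar α β ζ η ι M N) ^ (p/2)) ^ (-(1/p)) with hlam_def
  have key : lam * μ = 1 := by
    rw [hlam_def, hQs, hμ_def]
    exact key1 p γ q hp hγ hQ0 huv
  have hF : Fmap p α β γ ζ η ι M N =
      (![lam * M 0 / α ^ 2, lam * M 1 / α ^ 2,
         lam * (η ^ 2 * M 2 - ι * N 2) / (β ^ 2 * η ^ 2 - ι ^ 2)],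
       ![lam * N 0 / ζ ^ 2, lam * N 1 / ζ ^ 2,
         1 + lam * (β ^ 2 * N 2 - ι * M 2) / (β ^ 2 * η ^ 2 - ι ^ 2)]) := rfl
  clear_value q μ lam
  have e0 : lam * (μ * α ^ 2 * u 0) / α ^ 2 = u 0 := by
    field_simp; linear_combination (u 0) * key
  have e1 : lam * (μ * α ^ 2 * u 1) / α ^ 2 = u 1 := by
    field_simp; linear_combination (u 1) * key
  have e2 : lam * (η ^ 2 * (μ * (β ^ 2 * u 2 + ι * (v 2 - 1)))
      - ι * (μ * (ι * u 2 + η ^ 2 * (v 2 - 1)))) / (β ^ 2 * η ^ 2 - ι ^ 2) = u 2 := by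
    field_simp; linear_combination ((β ^ 2 * η ^ 2 - ι ^ 2) * u 2) * key
  have f0 : lam * (μ * ζ ^ 2 * v 0) / ζ ^ 2 = v 0 := by
    field_simp; linear_combination (v 0) * key
  have f1 : lam * (μ * ζ ^ 2 * v 1) / ζ ^ 2 = v 1 := by
    field_simp; linear_combination (v 1) * key
  have f2 : 1 + lam * (β ^ 2 * (μ * (ι * u 2 + η ^ 2 * (v 2 - 1)))
      - ι * (μ * (β ^ 2 * u 2 + ι * (v 2 - 1)))) / (β ^ 2 * η ^ 2 - ι ^ 2) = v 2 := by
    field_simp; linear_combination ((β ^ 2 * η ^ 2 - ι ^ 2) * (v 2 - 1)) * key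
  rw [hF, Prod.mk.injEq]
  constructor <;> funext i <;> fin_cases i
  exacts [e0, e1, e2, f0, f1, f2]

lemma GF (p α β γ ζ η ι : ℝ) (hp : 0 < p) (hα : 0 < α)
    (hβ : 0 < β) (hγ : 0 < γ) (hζ : 0 < ζ) (hη : 0 < η)
    (hβηι : 0 < β ^ 2 * η ^ 2 - ι ^ 2) (m n : Fin 3 → ℝ) :
    Q α β ζ η ι (Fmap p α β γ ζ η ι m n).1 (Fmap p α β γ ζ η ι m n).2 < 1 ∧
    Gmap p α β γ ζ η ι (Fmap p α β γ ζ η ι m n).1 (Fmap p α β γ ζ η ι m n).2 = (m, n) := by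
  have hα2 : (α:ℝ) ^ 2 ≠ 0 := by positivity
  have hζ2 : (ζ:ℝ) ^ 2 ≠ 0 := by positivity
  have hD : (β ^ 2 * η ^ 2 - ι ^ 2 : ℝ) ≠ 0 := hβηι.ne'
  have hD' : (η ^ 2 * β ^ 2 - ι ^ 2 : ℝ) ≠ 0 := by intro h; apply hD; linear_combination h
  have hD'' : (-ι ^ 2 + η ^ 2 * β ^ 2 : ℝ) ≠ 0 := by intro h; apply hD; linear_combination h
  have hQ0 : 0 ≤ Qstar α β ζ η ι m n := Qstar_nonneg α β ζ η ι m n hα hζ hβηι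
  set r : ℝ := Qstar α β ζ η ι m n with hr_def
  set lam : ℝ := (γ ^ p + r ^ (p/2)) ^ (-(1/p)) with hlam_def
  set U : Fin 3 → ℝ := ![lam * m 0 / α ^ 2, lam * m 1 / α ^ 2,
      lam * (η ^ 2 * m 2 - ι * n 2) / (β ^ 2 * η ^ 2 - ι ^ 2)] with hU
  set V : Fin 3 → ℝ := ![lam * n 0 / ζ ^ 2, lam * n 1 / ζ ^ 2,
      1 + lam * (β ^ 2 * n 2 - ι * m 2) / (β ^ 2 * η ^ 2 - ι ^ 2)] with hV
  have hF : Fmap p α β γ ζ η ι m n = (U, V) := rfl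
  rw [hF]
  have hQU : Q α β ζ η ι U V = lam ^ 2 * r := by
    rw [hU, hV, Q, hr_def, Qstar]
    simp only [Matrix.cons_val_zero, Matrix.cons_val_one, Matrix.head_cons,
      Matrix.cons_val_two, Matrix.tail_cons]
    field_simp
    ring
  obtain ⟨h1, h2⟩ := key2 p γ r hp hγ hQ0
  have hQlt : Q α β ζ η ι U V < 1 := by rw [hQU, hlam_def]; exact h1
  refine ⟨hQlt, ?_⟩
  set μ : ℝ := γ * (1 - (Q α β ζ η ι U V) ^ (p/2)) ^ (-(1/p)) with hμ_def
  have key : μ * lam = 1 := by rw [hμ_def, hQU, hlam_def]; exact h2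
  have hG : Gmap p α β γ ζ η ι U V =
      (![μ * α ^ 2 * U 0, μ * α ^ 2 * U 1, μ * (β ^ 2 * U 2 + ι * (V 2 - 1))],
       ![μ * ζ ^ 2 * V 0, μ * ζ ^ 2 * V 1, μ * (ι * U 2 + η ^ 2 * (V 2 - 1))]) := rfl
  clear_value μ lam r
  have e0 : μ * α ^ 2 * (lam * m 0 / α ^ 2) = m 0 := by
    field_simp; linear_combination (m 0) * key
  have e1 : μ * α ^ 2 * (lam * m 1 / α ^ 2) = m 1 := by
    field_simp; linear_combination (m 1) * key
  have e2 : μ * (β ^ 2 * (lam * (η ^ 2 * m 2 - ι * n 2) / (β ^ 2 * η ^ 2 - ι ^ 2))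
      + ι * ((1 + lam * (β ^ 2 * n 2 - ι * m 2) / (β ^ 2 * η ^ 2 - ι ^ 2)) - 1)) = m 2 := by
    field_simp; linear_combination ((β ^ 2 * η ^ 2 - ι ^ 2) * m 2) * key
  have f0 : μ * ζ ^ 2 * (lam * n 0 / ζ ^ 2) = n 0 := by
    field_simp; linear_combination (n 0) * key
  have f1 : μ * ζ ^ 2 * (lam * n 1 / ζ ^ 2) = n 1 := by
    field_simp; linear_combination (n 1) * key
  have f2 : μ * (ι * (lam * (η ^ 2 * m 2 - ι * n 2) / (β ^ 2 * η ^ 2 - ι ^ 2))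
      + η ^ 2 * ((1 + lam * (β ^ 2 * n 2 - ι * m 2) / (β ^ 2 * η ^ 2 - ι ^ 2)) - 1)) = n 2 := by
    field_simp; linear_combination ((β ^ 2 * η ^ 2 - ι ^ 2) * n 2) * key
  rw [hG, Prod.mk.injEq]
  constructor <;> funext i <;> fin_cases i
  exacts [e0, e1, e2, f0, f1, f2]

theorem Fmap_comp_Gmap_and_bijOn (p α β γ ζ η ι : ℝ) (hp : 0 < p) (hα : 0 < α)
    (hβ : 0 < β) (hγ : 0 < γ) (hζ : 0 < ζ) (hη : 0 < η)
    (hβηι : 0 < β ^ 2 * η ^ 2 - ι ^ 2) :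
    (∀ u v : Fin 3 → ℝ, Q α β ζ η ι u v < 1 →
      Fmap p α β γ ζ η ι (Gmap p α β γ ζ η ι u v).1 (Gmap p α β γ ζ η ι u v).2
        = (u, v)) ∧
    Set.BijOn (fun x : (Fin 3 → ℝ) × (Fin 3 → ℝ) => Fmap p α β γ ζ η ι x.1 x.2)
      Set.univ {x : (Fin 3 → ℝ) × (Fin 3 → ℝ) | Q α β ζ η ι x.1 x.2 < 1} := by
  refine ⟨fun u v huv => FG p α β γ ζ η ι hp hα hβ hγ hζ hη hβηι u v huv, ?_, ?_, ?_⟩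
  · intro x _
    exact (GF p α β γ ζ η ι hp hα hβ hγ hζ hη hβηι x.1 x.2).1
  · intro x _ y _ hxy
    have hx := (GF p α β γ ζ η ι hp hα hβ hγ hζ hη hβηι x.1 x.2).2
    have hy := (GF p α β γ ζ η ι hp hα hβ hγ hζ hη hβηι y.1 y.2).2
    simp only at hxy
    rw [hxy] at hx
    rw [hx] at hy
    rw [Prod.mk.injEq] at hy
    exact Prod.ext hy.1 hy.2
  · intro x hx
    refine ⟨Gmap p α β γ ζ η ι x.1 x.2, Set.mem_univ _, ?_⟩
    simp only
    rw [FG p α β γ ζ η ι hp hα hβ hγ hζ hη hβηι x.1 x.2 hx]
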